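/- Let (X_A, σ_A) be the edge shift of an irreducible nonnegative integer matrix A with λ_A > 1, let φ ∈ Aut(σ_A), let x ∈ X_A, and let n ≥ 1. Then φⁿ(R(x,0)) is a (−W⁻(n,φ^{−1}))-beam. Moreover: (1) if W⁻(n,φ^{−1}) ≤ 0, then φⁿ(R(x,0)) is a union of at most P_{X_A}(|W⁻(n,φ^{−1})| − W⁻(n,φ)) many distinct (−W⁻(n,φ^{−1}))-rays; (2) if W⁻(n,φ^{−1}) ≥ 0, then φⁿ(R(x,0)) is a union of at most P_{X_A}(|W⁻(n,φ)| − W⁻(n,φ^{−1})) many distinct (−W⁻(n,φ^{−1}))-rays. -/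

import Mathlib

open Matrix Set Filter

/-- The edge set of the directed graph with adjacency matrix `A`:
`A i j` edges from vertex `i` to vertex `j`. -/
def Edges {k : ℕ} (A : Matrix (Fin k) (Fin k) ℕ) : Type := Σ i j : Fin k, Fin (A i j)

namespace Edges

variable {k : ℕ} {A : Matrix (Fin k) (Fin k) ℕ}

/-- initial vertex of an edge -/
def src (e : Edges A) : Fin k := e.1

/-- terminal vertex of an edge -/
def tgt (e : Edges A) : Fin k := e.2.1

instance : UniformSpace (Edges A) := ⊥

instance : Fintype (Edges A) :=
  (@Sigma.instFintype _ _ (fun _ => inferInstance) _ : Fintype (Σ i j : Fin k, Fin (A i j)))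

end Edges

/-- The edge shift space `X_A`: bi-infinite edge paths. -/
def SFT {k : ℕ} (A : Matrix (Fin k) (Fin k) ℕ) : Set (ℤ → Edges A) :=
  {x | ∀ i : ℤ, (x i).tgt = (x (i + 1)).src}

/-- The shift map `σ_A` on `X_A`. -/
def shiftMap {k : ℕ} (A : Matrix (Fin k) (Fin k) ℕ) : ↥(SFT A) → ↥(SFT A) :=
  fun x => ⟨fun i => x.1 (i + 1), fun i => x.2 (i + 1)⟩

/-- The inverse shift map `σ_A⁻¹` on `X_A`. -/
def shiftInv {k : ℕ} (A : Matrix (Fin k) (Fin k) ℕ) : ↥(SFT A) → ↥(SFT A) :=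
  fun x => ⟨fun i => x.1 (i - 1), fun i => by
    have h := x.2 (i - 1)
    simpa [sub_add_cancel, add_sub_cancel_right] using h⟩

/-- `A` is irreducible: for all `I J` there is `n ≥ 1` with `(A^n) I J > 0`. -/
def IrreducibleMatrix {k : ℕ} (A : Matrix (Fin k) (Fin k) ℕ) : Prop :=
  ∀ I J : Fin k, ∃ n : ℕ, 1 ≤ n ∧ 0 < (A ^ n) I J

/-- `A` is primitive: some power of `A` has all entries strictly positive. -/
def PrimitiveMatrix {k : ℕ} (A : Matrix (Fin k) (Fin k) ℕ) : Prop :=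
  ∃ n : ℕ, 1 ≤ n ∧ ∀ I J : Fin k, 0 < (A ^ n) I J

/-- `φ` together with its inverse `ψ` is an automorphism of the system `(α, T)`:
a homeomorphism commuting with `T`. -/
def IsAutPair {α : Type*} [TopologicalSpace α] (T φ ψ : α → α) : Prop :=
  Continuous φ ∧ Continuous ψ ∧ Function.LeftInverse ψ φ ∧ Function.RightInverse ψ φ ∧
    φ ∘ T = T ∘ φ

section Coding

variable {E : Type*} {X : Set (ℤ → E)}

/-- `S` `φ`-codes `T`. -/
def Codes (φ : ↥X → ↥X) (S T : Set ℤ) : Prop :=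
  ∀ x y : ↥X, (∀ i ∈ S, (x : ℤ → E) i = (y : ℤ → E) i) →
    ∀ j ∈ T, (φ x : ℤ → E) j = (φ y : ℤ → E) j

/-- `W⁻(n, φ) = sup {m : (-∞,0] φⁿ-codes (-∞,m]}`. -/
noncomputable def Wminus (φ : ↥X → ↥X) (n : ℕ) : ℤ :=
  sSup {m : ℤ | Codes (φ^[n]) (Set.Iic 0) (Set.Iic m)}

/-- `W⁺(n, φ) = inf {m : [0,∞) φⁿ-codes [m,∞)}`. -/
noncomputable def Wplus (φ : ↥X → ↥X) (n : ℕ) : ℤ :=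
  sInf {m : ℤ | Codes (φ^[n]) (Set.Ici 0) (Set.Ici m)}

end Coding

section Dimension

variable {k : ℕ} (A : Matrix (Fin k) (Fin k) ℕ)

/-- `A` as a matrix over `ℚ`. -/
def Aq : Matrix (Fin k) (Fin k) ℚ := A.map (Nat.cast : ℕ → ℚ)

/-- The eventual range `R(A) = ℚ^k · A^k` (row vectors). -/
noncomputable def evRange : Submodule ℚ (Fin k → ℚ) :=
  LinearMap.range (Matrix.vecMulLinear (Aq A ^ k))

lemma evRange_mapsTo :
    ∀ x ∈ evRange A, Matrix.vecMulLinear (Aq A) x ∈ evRange A := by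
  rintro x ⟨y, rfl⟩
  exact ⟨Matrix.vecMulLinear (Aq A) y, by
    simp [Matrix.vecMulLinear_apply, Matrix.vecMul_vecMul, ← pow_succ, ← pow_succ']⟩

/-- `δ_A`, the restriction of (right multiplication by) `A` to `R(A)`. -/
noncomputable def deltaA : ↥(evRange A) →ₗ[ℚ] ↥(evRange A) :=
  LinearMap.restrict (Matrix.vecMulLinear (Aq A)) (evRange_mapsTo A)

/-- The `m`-ray `R(x, m)` determined by a point `x ∈ X_A`. -/
def ray (x : ↥(SFT A)) (m : ℤ) : Set ↥(SFT A) :=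
  {y | ∀ i : ℤ, i ≤ m → (y : ℤ → Edges A) i = (x : ℤ → Edges A) i}

/-- `U` is an `m`-beam: a finite union of `m`-rays. -/
def IsBeam (U : Set ↥(SFT A)) (m : ℤ) : Prop :=
  ∃ F : Finset ↥(SFT A), U = ⋃ x ∈ F, ray A x m

/-- The vector `v_{U,m}`: its `J`-th entry counts the distinct `m`-rays contained in the
`m`-beam `U` whose `m`-th edge ends at vertex `J`. -/
noncomputable def beamVec (U : Set ↥(SFT A)) (m : ℤ) : Fin k → ℚ := fun J =>
  (Nat.card {t : {i : ℤ // i ≤ m} → Edges A //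
    (∃ y ∈ U, ∀ i : {i : ℤ // i ≤ m}, (y : ℤ → Edges A) i.1 = t i) ∧
      (t ⟨m, le_refl m⟩).tgt = J} : ℚ)

/-- `g = θ(U)`, i.e. `g ∈ R(A)` and `δ_A^{k+m} g = v_{U,m} · A^k` for some presentation of `U`
as an `m`-beam. -/
def IsThetaVal (U : Set ↥(SFT A)) (g : Fin k → ℚ) : Prop :=
  g ∈ evRange A ∧ ∃ m : ℕ, IsBeam A U (m : ℤ) ∧
    g ᵥ* (Aq A ^ (k + m)) = beamVec A U (m : ℤ) ᵥ* (Aq A ^ k)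

/-- `S` is the image of `φ` under the dimension representation: a linear automorphism of
`R(A)` commuting with `δ_A` and satisfying `S (θ U) = θ (φ '' U)` for every beam `U`. -/
def IsDimRep (φ : ↥(SFT A) → ↥(SFT A)) (S : ↥(evRange A) →ₗ[ℚ] ↥(evRange A)) : Prop :=
  Function.Bijective S ∧ S ∘ₗ deltaA A = deltaA A ∘ₗ S ∧
    ∀ (U : Set ↥(SFT A)) (g h : Fin k → ℚ) (hg : IsThetaVal A U g)
      (hh : IsThetaVal A (φ '' U) h), S ⟨g, hg.1⟩ = ⟨h, hh.1⟩

/-- The set of eigenvalues of the complexification `S ⊗ 1` of a linear endomorphism `S`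
of `R(A)`: the complex roots of the characteristic polynomial of `S`. -/
noncomputable def cSpectrum (S : ↥(evRange A) →ₗ[ℚ] ↥(evRange A)) : Set ℂ :=
  {z : ℂ | ((LinearMap.charpoly S).map (algebraMap ℚ ℂ)).IsRoot z}

/-- The spectral radius of the complexification of `S`. -/
noncomputable def specRad (S : ↥(evRange A) →ₗ[ℚ] ↥(evRange A)) : ℝ :=
  sSup ((fun z : ℂ => ‖z‖) '' cSpectrum A S)

/-- The set of nonzero-spectrum eigenvalues of `A` over `ℂ` (roots of its characteristic
polynomial). -/
noncomputable def matSpectrum : Set ℂ :=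
  {z : ℂ | (Matrix.charpoly (A.map (Nat.cast : ℕ → ℂ))).IsRoot z}

/-- The spectral radius `ρ(A)`. -/
noncomputable def rhoA : ℝ := sSup ((fun z : ℂ => ‖z‖) '' matSpectrum A)

/-- `ρ_A⁻ = |λ_s|⁻¹` where `λ_s` is a nonzero eigenvalue of `A` of minimal modulus:
the spectral radius of `δ_A⁻¹ ⊗ 1`. -/
noncomputable def rhoAminus : ℝ :=
  sSup ((fun z => ‖z‖⁻¹) '' (matSpectrum A \ {0}))

/-- The number of admissible words of length `m` in `X_A` (with `P(0) = 1`);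
for an integer argument `z`, the value is `P(max z 0)`. -/
noncomputable def wordCount (z : ℤ) : ℕ :=
  Nat.card {w : Fin z.toNat → Edges A //
    ∃ (x : ↥(SFT A)) (i : ℤ), ∀ j : Fin z.toNat, (x : ℤ → Edges A) (i + j) = w j}

end Dimension
namespace SFTAux

variable {k : ℕ} (A : Matrix (Fin k) (Fin k) ℕ)

instance : DiscreteTopology (Edges A) := ⟨rfl⟩

lemma sft_isClosed : IsClosed (SFT A) := by
  have h : SFT A = ⋂ i : ℤ, {x : ℤ → Edges A | (x i).tgt = (x (i + 1)).src} := by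
    ext x; simp [SFT, Set.mem_iInter]
  rw [h]
  refine isClosed_iInter fun i => ?_
  letI : TopologicalSpace (Fin k) := ⊥
  haveI : DiscreteTopology (Fin k) := ⟨rfl⟩
  exact isClosed_eq
    (Continuous.comp (g := Edges.tgt) continuous_of_discreteTopology (continuous_apply i))
    (Continuous.comp (g := Edges.src) continuous_of_discreteTopology (continuous_apply (i + 1)))

instance : CompactSpace ↥(SFT A) :=
  isCompact_iff_compactSpace.mp ((sft_isClosed A).isCompact)

def shiftZ (t : ℤ) (x : ↥(SFT A)) : ↥(SFT A) :=
  ⟨fun i => x.1 (i + t), fun i => by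
    have h := x.2 (i + t)
    have e : i + t + 1 = i + 1 + t := by ring
    rw [e] at h
    exact h⟩

variable {A}

@[simp] lemma shiftZ_apply (t : ℤ) (x : ↥(SFT A)) (i : ℤ) :
    (shiftZ A t x).1 i = x.1 (i + t) := rfl

lemma shiftZ_zero (x : ↥(SFT A)) : shiftZ A 0 x = x :=
  Subtype.ext (funext fun i => congrArg x.1 (by ring))

lemma shiftMap_shiftZ (t : ℤ) (x : ↥(SFT A)) :
    shiftMap A (shiftZ A t x) = shiftZ A (t + 1) x :=
  Subtype.ext (funext fun i => congrArg x.1 (by ring))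

lemma shiftInv_shiftZ (t : ℤ) (x : ↥(SFT A)) :
    shiftInv A (shiftZ A t x) = shiftZ A (t - 1) x :=
  Subtype.ext (funext fun i => congrArg x.1 (by ring))

lemma shiftMap_shiftInv (x : ↥(SFT A)) : shiftMap A (shiftInv A x) = x :=
  Subtype.ext (funext fun i => congrArg x.1 (by ring))

lemma shiftInv_shiftMap (x : ↥(SFT A)) : shiftInv A (shiftMap A x) = x :=
  Subtype.ext (funext fun i => congrArg x.1 (by ring))

lemma iter_comm_shiftMap {f : ↥(SFT A) → ↥(SFT A)}
    (hf : ∀ x, f (shiftMap A x) = shiftMap A (f x)) (n : ℕ) :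
    ∀ x, f^[n] (shiftMap A x) = shiftMap A (f^[n] x) := by
  induction n with
  | zero => intro x; simp
  | succ n ih =>
      intro x
      rw [Function.iterate_succ_apply, hf, ih, Function.iterate_succ_apply]

lemma comm_shiftInv {f : ↥(SFT A) → ↥(SFT A)}
    (hf : ∀ x, f (shiftMap A x) = shiftMap A (f x)) (x : ↥(SFT A)) :
    f (shiftInv A x) = shiftInv A (f x) := by
  have h := hf (shiftInv A x)
  rw [shiftMap_shiftInv] at h
  rw [h, shiftInv_shiftMap]

lemma comm_shiftZ {f : ↥(SFT A) → ↥(SFT A)}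
    (hf : ∀ x, f (shiftMap A x) = shiftMap A (f x)) (t : ℤ) (x : ↥(SFT A)) :
    f (shiftZ A t x) = shiftZ A t (f x) := by
  induction t using Int.induction_on with
  | zero => rw [shiftZ_zero, shiftZ_zero]
  | succ m ih => rw [← shiftMap_shiftZ, hf, ih, shiftMap_shiftZ]
  | pred m ih => rw [← shiftInv_shiftZ, comm_shiftInv hf, ih, shiftInv_shiftZ]

lemma codes_shift {f : ↥(SFT A) → ↥(SFT A)}
    (hf : ∀ x, f (shiftMap A x) = shiftMap A (f x)) {c : ℤ}
    (hc : Codes f (Set.Iic 0) (Set.Iic c)) (m : ℤ) :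
    Codes f (Set.Iic m) (Set.Iic (m + c)) := by
  intro x y hxy j hj
  have h := hc (shiftZ A m x) (shiftZ A m y)
    (fun i hi => hxy (i + m) (by simp only [Set.mem_Iic] at hi ⊢; omega))
    (j - m) (by simp only [Set.mem_Iic] at hj ⊢; omega)
  rw [comm_shiftZ hf, comm_shiftZ hf] at h
  have e : j - m + m = j := by ring
  simpa [shiftZ_apply, e] using h

lemma exists_coding_radius (f : ↥(SFT A) → ↥(SFT A)) (hf : Continuous f) :
    ∃ m : ℕ, ∀ x y : ↥(SFT A), (∀ i : ℤ, |i| ≤ (m : ℤ) → x.1 i = y.1 i) →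
      (f x).1 0 = (f y).1 0 := by
  by_contra hcon
  push_neg at hcon
  set t : ℕ → Set (↥(SFT A) × ↥(SFT A)) := fun m =>
    {p | (∀ i : ℤ, |i| ≤ (m : ℤ) → p.1.1 i = p.2.1 i) ∧ (f p.1).1 0 ≠ (f p.2).1 0} with ht
  have hclosed : ∀ m, IsClosed (t m) := by
    intro m
    have he : t m = (⋂ i : ℤ, {p : ↥(SFT A) × ↥(SFT A) | |i| ≤ (m : ℤ) → p.1.1 i = p.2.1 i}) ∩
        {p | (f p.1).1 0 ≠ (f p.2).1 0} := by
      ext p; simp [ht, Set.mem_iInter]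
    rw [he]
    refine IsClosed.inter (isClosed_iInter fun i => ?_) ?_
    · by_cases hi : |i| ≤ (m : ℤ)
      · have : {p : ↥(SFT A) × ↥(SFT A) | |i| ≤ (m : ℤ) → p.1.1 i = p.2.1 i} =
            {p : ↥(SFT A) × ↥(SFT A) | p.1.1 i = p.2.1 i} := by
          ext p; simp [hi]
        rw [this]
        exact isClosed_eq
          ((continuous_apply i).comp (continuous_subtype_val.comp continuous_fst))
          ((continuous_apply i).comp (continuous_subtype_val.comp continuous_snd))
      · have : {p : ↥(SFT A) × ↥(SFT A) | |i| ≤ (m : ℤ) → p.1.1 i = p.2.1 i} = Set.univ := by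
          ext p; simp [hi]
        rw [this]; exact isClosed_univ
    · have : {p : ↥(SFT A) × ↥(SFT A) | (f p.1).1 0 ≠ (f p.2).1 0} =
          (fun p : ↥(SFT A) × ↥(SFT A) => ((f p.1).1 0, (f p.2).1 0)) ⁻¹'
            {q : Edges A × Edges A | q.1 ≠ q.2} := rfl
      rw [this]
      refine IsClosed.preimage ?_ (isClosed_discrete _)
      exact Continuous.prodMk
        ((continuous_apply 0).comp (continuous_subtype_val.comp (hf.comp continuous_fst)))
        ((continuous_apply 0).comp (continuous_subtype_val.comp (hf.comp continuous_snd)))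
  have hne : ∀ m, (t m).Nonempty := by
    intro m
    obtain ⟨x, y, hxy, hne⟩ := hcon m
    exact ⟨(x, y), hxy, hne⟩
  have hsub : ∀ m, t (m + 1) ⊆ t m := by
    intro m p hp
    exact ⟨fun i hi => hp.1 i (le_trans hi (by push_cast; omega)), hp.2⟩
  obtain ⟨p, hp⟩ := IsCompact.nonempty_iInter_of_sequence_nonempty_isCompact_isClosed t hsub
    hne ((hclosed 0).isCompact) hclosed
  have hpm : ∀ m, p ∈ t m := fun m => Set.mem_iInter.mp hp m
  have hpe : p.1 = p.2 := by
    apply Subtype.ext; funext i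
    exact (hpm i.natAbs).1 i (le_of_eq (Int.abs_eq_natAbs i))
  exact (hpm 0).2 (by rw [hpe])

lemma codes_nonempty {f : ↥(SFT A) → ↥(SFT A)} (hfc : Continuous f)
    (hf : ∀ x, f (shiftMap A x) = shiftMap A (f x)) :
    ∃ c : ℤ, Codes f (Set.Iic 0) (Set.Iic c) := by
  obtain ⟨m, hm⟩ := exists_coding_radius f hfc
  refine ⟨-(m : ℤ), fun x y hxy j hj => ?_⟩
  simp only [Set.mem_Iic] at hj
  have h := hm (shiftZ A j x) (shiftZ A j y) (fun i hi => by
    refine hxy (i + j) ?_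
    have := abs_le.mp hi
    simp only [Set.mem_Iic]
    omega)
  rw [comm_shiftZ hf, comm_shiftZ hf] at h
  simpa using h

lemma codes_bddAbove {f : ↥(SFT A) → ↥(SFT A)} (hinj : Function.Injective f)
    (u v : ↥(SFT A)) (huv : u ≠ v) (hagree : ∀ i ≤ (0 : ℤ), u.1 i = v.1 i) :
    BddAbove {c : ℤ | Codes f (Set.Iic 0) (Set.Iic c)} := by
  have hne : f u ≠ f v := fun h => huv (hinj h)
  have hex : ∃ j : ℤ, (f u).1 j ≠ (f v).1 j := by
    by_contra hc; push_neg at hc; exact hne (Subtype.ext (funext hc))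
  obtain ⟨j, hj⟩ := hex
  refine ⟨j, fun c hc => ?_⟩
  by_contra hlt
  push_neg at hlt
  exact hj (hc u v (fun i hi => hagree i hi) j (by simp only [Set.mem_Iic]; omega))

def fwd (nxt : Fin k → Edges A) (e : Edges A) : ℕ → Edges A
  | 0 => e
  | t + 1 => nxt (fwd nxt e t).tgt

def bwd (prv : Fin k → Edges A) (e : Edges A) : ℕ → Edges A
  | 0 => e
  | t + 1 => prv (bwd prv e t).src

def pathFrom (nxt prv : Fin k → Edges A) (e : Edges A) : ℤ → Edges A :=
  fun j => if 1 ≤ j then fwd nxt e (j - 1).toNat else bwd prv (prv e.src) (-j).toNat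

lemma pathFrom_mem (nxt prv : Fin k → Edges A) (hnxt : ∀ J, (nxt J).src = J)
    (hprv : ∀ J, (prv J).tgt = J) (e : Edges A) : pathFrom nxt prv e ∈ SFT A := by
  intro i
  by_cases h1 : 1 ≤ i
  · have h2 : (1 : ℤ) ≤ i + 1 := by omega
    simp only [pathFrom, if_pos h1, if_pos h2]
    have he : (i + 1 - 1).toNat = (i - 1).toNat + 1 := by omega
    rw [he]
    show (fwd nxt e (i - 1).toNat).tgt = (nxt (fwd nxt e (i - 1).toNat).tgt).src
    rw [hnxt]
  · by_cases h0 : i = 0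
    · subst h0
      simp only [pathFrom]
      rw [if_neg (by omega), if_pos (by omega)]
      show (bwd prv (prv e.src) (-(0:ℤ)).toNat).tgt = (fwd nxt e ((0:ℤ) + 1 - 1).toNat).src
      norm_num [bwd, fwd, hprv]
    · simp only [pathFrom]
      rw [if_neg (by omega), if_neg (by omega)]
      have he : (-i).toNat = (-(i + 1)).toNat + 1 := by omega
      rw [he]
      show (prv (bwd prv (prv e.src) (-(i+1)).toNat).src).tgt
        = (bwd prv (prv e.src) (-(i+1)).toNat).src
      rw [hprv]

lemma exists_two_points (hA : IrreducibleMatrix A) (lamA : ℝ) (hlamA : 1 < lamA)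
    (w : Fin k → ℝ) (hw : ∀ i, 0 < w i)
    (heig : (A.map (Nat.cast : ℕ → ℝ)).mulVec w = lamA • w) (x0 : ↥(SFT A)) :
    ∃ u v : ↥(SFT A), u ≠ v ∧ ∀ i ≤ (0 : ℤ), u.1 i = v.1 i := by
  haveI : Nonempty (Fin k) := ⟨(x0.1 0).1⟩
  have hout : ∀ J : Fin k, ∃ e : Edges A, e.src = J := by
    intro J
    obtain ⟨n, hn1, hpos⟩ := hA J J
    obtain ⟨m, rfl⟩ : ∃ m, n = m + 1 := ⟨n - 1, by omega⟩
    rw [pow_succ', Matrix.mul_apply] at hpos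
    obtain ⟨l, -, hl⟩ : ∃ l ∈ Finset.univ, A J l * (A ^ m) l J ≠ 0 :=
      Finset.exists_ne_zero_of_sum_ne_zero hpos.ne'
    exact ⟨⟨J, l, ⟨0, Nat.pos_of_ne_zero fun h => hl (by rw [h, zero_mul])⟩⟩, rfl⟩
  have hin : ∀ J : Fin k, ∃ e : Edges A, e.tgt = J := by
    intro J
    obtain ⟨n, hn1, hpos⟩ := hA J J
    obtain ⟨m, rfl⟩ : ∃ m, n = m + 1 := ⟨n - 1, by omega⟩
    rw [pow_succ, Matrix.mul_apply] at hpos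
    obtain ⟨l, -, hl⟩ : ∃ l ∈ Finset.univ, (A ^ m) J l * A l J ≠ 0 :=
      Finset.exists_ne_zero_of_sum_ne_zero hpos.ne'
    exact ⟨⟨l, J, ⟨0, Nat.pos_of_ne_zero fun h => hl (by rw [h, mul_zero])⟩⟩, rfl⟩
  choose nxt hnxt using hout
  choose prv hprv using hin
  have h2 : ∃ i0 : Fin k, 2 ≤ ∑ j, A i0 j := by
    by_contra hc
    push_neg at hc
    obtain ⟨i0, hi0⟩ := Finite.exists_max w
    have he := congrFun heig i0
    have hsum : ∑ j, (A i0 j : ℝ) * w j = lamA * w i0 := by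
      simpa [Matrix.mulVec, Matrix.map_apply, dotProduct, Pi.smul_apply,
        smul_eq_mul] using he
    have hle : ∑ j, (A i0 j : ℝ) * w j ≤ ∑ j, (A i0 j : ℝ) * w i0 :=
      Finset.sum_le_sum fun j _ => mul_le_mul_of_nonneg_left (hi0 j) (by positivity)
    have heq2 : ∑ j, (A i0 j : ℝ) * w i0 = ((∑ j, A i0 j : ℕ) : ℝ) * w i0 := by
      push_cast
      rw [← Finset.sum_mul]
    have hrow : ((∑ j, A i0 j : ℕ) : ℝ) ≤ 1 := by
      have := hc i0
      exact_mod_cast by omega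
    nlinarith [hw i0]
  obtain ⟨i0, hi0⟩ := h2
  have hcard : 1 < Fintype.card (Σ j : Fin k, Fin (A i0 j)) := by
    rw [Fintype.card_sigma]
    simp only [Fintype.card_fin]; omega
  obtain ⟨t, t', htt⟩ := Fintype.exists_pair_of_one_lt_card hcard
  have hee : (⟨i0, t⟩ : Edges A) ≠ ⟨i0, t'⟩ := by
    intro h
    exact htt (eq_of_heq (Sigma.mk.inj_iff.mp h).2)
  refine ⟨⟨pathFrom nxt prv ⟨i0, t⟩, pathFrom_mem nxt prv hnxt hprv _⟩,
      ⟨pathFrom nxt prv ⟨i0, t'⟩, pathFrom_mem nxt prv hnxt hprv _⟩, ?_, ?_⟩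
  · intro h
    have h1 := congrFun (congrArg Subtype.val h) 1
    simp only [pathFrom, if_pos le_rfl] at h1
    norm_num [fwd] at h1
    exact hee h1
  · intro i hi
    simp only [pathFrom, if_neg (by omega : ¬ (1 : ℤ) ≤ i)]
    rfl

end SFTAux


/-- For any `0`-ray `R(x,0)` and any `n ≥ 1`, `φⁿ(R(x,0))` is a
`(−W⁻(n,φ⁻¹))`-beam; moreover if `W⁻(n,φ⁻¹) ≤ 0` it is a union of at most
`P_{X_A}(|W⁻(n,φ⁻¹)| − W⁻(n,φ))` distinct `(−W⁻(n,φ⁻¹))`-rays, and if `W⁻(n,φ⁻¹) ≥ 0` it is a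
union of at most `P_{X_A}(|W⁻(n,φ)| − W⁻(n,φ⁻¹))` distinct `(−W⁻(n,φ⁻¹))`-rays. -/
theorem stmt11 {k : ℕ} (A : Matrix (Fin k) (Fin k) ℕ) (hA : IrreducibleMatrix A)
    (lamA : ℝ) (hlamA : 1 < lamA) (w : Fin k → ℝ) (hw : ∀ i, 0 < w i)
    (heig : (A.map (Nat.cast : ℕ → ℝ)).mulVec w = lamA • w)
    (φ ψ : ↥(SFT A) → ↥(SFT A)) (hφ : IsAutPair (shiftMap A) φ ψ)
    (x : ↥(SFT A)) (n : ℕ) (hn : 1 ≤ n) :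
    IsBeam A (φ^[n] '' ray A x 0) (-(Wminus ψ n)) ∧
      (Wminus ψ n ≤ 0 →
        ∃ F : Finset ↥(SFT A), (F.card : ℤ) ≤ wordCount A (|Wminus ψ n| - Wminus φ n) ∧
          φ^[n] '' ray A x 0 = ⋃ y ∈ F, ray A y (-(Wminus ψ n))) ∧
      (0 ≤ Wminus ψ n →
        ∃ F : Finset ↥(SFT A), (F.card : ℤ) ≤ wordCount A (|Wminus φ n| - Wminus ψ n) ∧
          φ^[n] '' ray A x 0 = ⋃ y ∈ F, ray A y (-(Wminus ψ n))) := by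
  classical
  obtain ⟨hφc, hψc, hlinv, hrinv, hcomm⟩ := hφ
  have hcφ : ∀ z, φ (shiftMap A z) = shiftMap A (φ z) := fun z => congrFun hcomm z
  have hcψ : ∀ z, ψ (shiftMap A z) = shiftMap A (ψ z) := by
    intro z
    have h1 : shiftMap A z = shiftMap A (φ (ψ z)) := by rw [hrinv z]
    rw [h1, ← hcφ, hlinv]
  have hcφn := SFTAux.iter_comm_shiftMap hcφ n
  have hcψn := SFTAux.iter_comm_shiftMap hcψ n
  have hLI : Function.LeftInverse ψ^[n] φ^[n] := hlinv.iterate n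
  have hRI : Function.LeftInverse φ^[n] ψ^[n] := Function.LeftInverse.iterate hrinv n
  obtain ⟨u, v, huv, hagr⟩ := SFTAux.exists_two_points hA lamA hlamA w hw heig x
  have haSet : Codes ψ^[n] (Set.Iic 0) (Set.Iic (Wminus ψ n)) :=
    Int.csSup_mem (SFTAux.codes_nonempty (hψc.iterate n) hcψn)
      (SFTAux.codes_bddAbove hRI.injective u v huv hagr)
  have hbSet : Codes φ^[n] (Set.Iic 0) (Set.Iic (Wminus φ n)) :=
    Int.csSup_mem (SFTAux.codes_nonempty (hφc.iterate n) hcφn)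
      (SFTAux.codes_bddAbove hLI.injective u v huv hagr)
  set a := Wminus ψ n with ha
  set b := Wminus φ n with hb
  have hab : a + b ≤ 0 := by
    by_contra hpos
    push_neg at hpos
    have hstep : ∀ m : ℤ, (∀ i ≤ m, u.1 i = v.1 i) → ∀ i ≤ m + b + a, u.1 i = v.1 i := by
      intro m hm i hi
      have h1 := SFTAux.codes_shift hcφn hbSet m
      have h2 := SFTAux.codes_shift hcψn haSet (m + b)
      have h3 := h2 (φ^[n] u) (φ^[n] v)
        (fun j hj => h1 u v (fun i' hi' => hm i' hi') j hj) i
        (by simp only [Set.mem_Iic] at hi ⊢; omega)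
      rwa [hLI u, hLI v] at h3
    have hall : ∀ t : ℕ, ∀ i ≤ (t : ℤ) * (b + a), u.1 i = v.1 i := by
      intro t
      induction t with
      | zero => intro i hi; exact hagr i (by simpa using hi)
      | succ t ih =>
          intro i hi
          refine hstep ((t : ℤ) * (b + a)) ih i ?_
          have hcast : ((t + 1 : ℕ) : ℤ) * (b + a) = (t : ℤ) * (b + a) + b + a := by
            push_cast; ring
          linarith [hi]
    have huv' : u = v := by
      apply Subtype.ext; funext i
      have h2 : (i.toNat : ℤ) ≤ (i.toNat : ℤ) * (b + a) :=
        le_mul_of_one_le_right (by positivity) (by omega)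
      exact hall i.toNat i (le_trans (Int.self_le_toNat i) h2)
    exact huv huv'
  have claimA : ∀ z ∈ φ^[n] '' ray A x 0, ray A z (-a) ⊆ φ^[n] '' ray A x 0 := by
    rintro z ⟨y, hy, rfl⟩ z' hz'
    have h1 := SFTAux.codes_shift hcψn haSet (-a)
    have h0 : -a + a = 0 := by ring
    rw [h0] at h1
    refine ⟨ψ^[n] z', fun i hi => ?_, hRI z'⟩
    have h2 := h1 z' (φ^[n] y) (fun j hj => hz' j hj) i (by simpa using hi)
    rw [hLI y] at h2
    exact h2.trans (hy i hi)
  have claimB : ∀ z ∈ φ^[n] '' ray A x 0, ∀ z' ∈ φ^[n] '' ray A x 0,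
      ∀ i ≤ b, z.1 i = z'.1 i := by
    rintro _ ⟨y, hy, rfl⟩ _ ⟨y', hy', rfl⟩ i hi
    exact hbSet y y' (fun j hj => (hy j hj).trans (hy' j hj).symm) i hi
  set cc : ℤ := -a - b with hcc
  set wd : ↥(SFT A) → (Fin cc.toNat → Edges A) := fun z j => z.1 (b + 1 + (j : ℤ)) with hwd
  have key : ∀ z ∈ φ^[n] '' ray A x 0, ∀ z' ∈ φ^[n] '' ray A x 0,
      wd z = wd z' → ∀ i ≤ -a, z.1 i = z'.1 i := by
    intro z hz z' hz' hww i hi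
    by_cases hib : i ≤ b
    · exact claimB z hz z' hz' i hib
    · have hj : (i - b - 1).toNat < cc.toNat := by omega
      have hthis := congrFun hww ⟨(i - b - 1).toNat, hj⟩
      simp only [hwd] at hthis
      have harg : b + 1 + (((i - b - 1).toNat : ℕ) : ℤ) = i := by omega
      rwa [harg] at hthis
  set V : Set (Fin cc.toNat → Edges A) := {w' | ∃ z ∈ φ^[n] '' ray A x 0, wd z = w'} with hV
  have hVfin : V.Finite := Set.toFinite V
  set hfun : (Fin cc.toNat → Edges A) → ↥(SFT A) :=
    fun w' => if hw' : ∃ z ∈ φ^[n] '' ray A x 0, wd z = w' then hw'.choose else x with hhfun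
  have hmemh : ∀ w' ∈ V, hfun w' ∈ φ^[n] '' ray A x 0 ∧ wd (hfun w') = w' := by
    intro w' hw'
    have hw'' : ∃ z ∈ φ^[n] '' ray A x 0, wd z = w' := hw'
    simp only [hhfun, dif_pos hw'']
    exact ⟨hw''.choose_spec.1, hw''.choose_spec.2⟩
  set F : Finset ↥(SFT A) := hVfin.toFinset.image hfun with hF
  have hUnion : φ^[n] '' ray A x 0 = ⋃ y ∈ F, ray A y (-a) := by
    ext z
    simp only [Set.mem_iUnion, exists_prop]
    constructor
    · intro hz
      have hwV : wd z ∈ V := ⟨z, hz, rfl⟩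
      obtain ⟨hm1, hm2⟩ := hmemh _ hwV
      refine ⟨hfun (wd z), Finset.mem_image_of_mem hfun (hVfin.mem_toFinset.mpr hwV),
        fun i hi => ?_⟩
      exact key z hz (hfun (wd z)) hm1 hm2.symm i hi
    · rintro ⟨y, hyF, hzy⟩
      obtain ⟨w', hw', rfl⟩ := Finset.mem_image.mp hyF
      exact claimA _ (hmemh w' (hVfin.mem_toFinset.mp hw')).1 hzy
  have hcard : (F.card : ℤ) ≤ (wordCount A cc : ℤ) := by
    have h1 : F.card ≤ hVfin.toFinset.card := Finset.card_image_le
    have h2 : hVfin.toFinset.card = Nat.card V := by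
      rw [Nat.card_coe_set_eq, Set.ncard_eq_toFinset_card _ hVfin]
    have h3 : Nat.card V ≤ wordCount A cc := by
      unfold wordCount
      have hinj : Function.Injective (fun p : ↥V =>
          (⟨p.1, by
            obtain ⟨z, hz, hwz⟩ := p.2
            exact ⟨z, b + 1, fun j => by rw [← hwz]⟩⟩ :
            {w' : Fin cc.toNat → Edges A // ∃ (x' : ↥(SFT A)) (i : ℤ),
              ∀ j : Fin cc.toNat, (x' : ℤ → Edges A) (i + j) = w' j})) := by
        intro p q hpq
        exact Subtype.ext (Subtype.mk_eq_mk.mp hpq)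
      exact Nat.card_le_card_of_injective _ hinj
    omega
  refine ⟨⟨F, hUnion⟩, ?_, ?_⟩
  · intro hle
    refine ⟨F, ?_, hUnion⟩
    have he : |a| - b = cc := by rw [hcc, abs_of_nonpos hle]
    rw [he]; exact hcard
  · intro hle
    refine ⟨F, ?_, hUnion⟩
    have he : |b| - a = cc := by
      rw [hcc, abs_of_nonpos (show b ≤ 0 by omega)]
      ring
    rw [he]; exact hcard
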